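/- Let A be an integral domain and J ⊆ A an ideal such that A is J-adically complete. Let I₁, …, I_s be prime ideals of A⟦t⟧ such that t ∉ I_i for all 1 ≤ i ≤ s, and let c be a nonzero element of the ideal (J) of A⟦t⟧ generated by the image of J. Then the set of integers p ≥ 1 for which there exists some 1 ≤ i ≤ s with t + c^p ∈ I_i has at most s elements. -/

import Mathlib

private lemma unique_exp {A : Type*} [CommRing A] [IsDomain A] (J : Ideal A) [IsAdicComplete J A]
    (Ii : Ideal (PowerSeries A)) (hprime : Ii.IsPrime)
    (htX : (PowerSeries.X : PowerSeries A) ∉ Ii)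
    (c : PowerSeries A) (hcJ : c ∈ Ideal.map (PowerSeries.C : A →+* PowerSeries A) J)
    {p q : ℕ} (hpq : p < q)
    (hp : PowerSeries.X + c ^ p ∈ Ii) (hq : PowerSeries.X + c ^ q ∈ Ii) : False := by
  -- constant coefficient of c lies in J
  have hcc : (PowerSeries.constantCoeff (R := A)) c ∈ J := by
    have : (PowerSeries.constantCoeff (R := A)) c ∈
        Ideal.map (PowerSeries.constantCoeff (R := A)) (Ideal.map (PowerSeries.C : A →+* PowerSeries A) J) :=
      Ideal.mem_map_of_mem _ hcJ
    rwa [Ideal.map_map, PowerSeries.constantCoeff_comp_C, Ideal.map_id] at this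
  -- 1 - c^(q-p) is a unit
  have hunit : IsUnit (1 - c ^ (q - p)) := by
    rw [PowerSeries.isUnit_iff_constantCoeff, map_sub, map_one, map_pow]
    have hj : ((PowerSeries.constantCoeff (R := A)) c) ^ (q - p) ∈ J := Ideal.pow_mem_of_mem J hcc _
      (by omega)
    have := (Ideal.mem_jacobson_bot.mp (IsAdicComplete.le_jacobson_bot J hj)) (-1)
    simpa [mul_comm, sub_eq_add_neg, mul_neg, add_comm] using this
  -- c^p * (1 - c^(q-p)) ∈ Ii
  have hdiff : c ^ p * (1 - c ^ (q - p)) ∈ Ii := by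
    have : (PowerSeries.X + c ^ p) - (PowerSeries.X + c ^ q) ∈ Ii := Ii.sub_mem hp hq
    have heq : (PowerSeries.X + c ^ p) - (PowerSeries.X + c ^ q)
        = c ^ p * (1 - c ^ (q - p)) := by
      rw [mul_sub, mul_one, ← pow_add]
      rw [show p + (q - p) = q by omega]
      ring
    rwa [heq] at this
  have hcp : c ^ p ∈ Ii := by
    rcases (hprime.mem_or_mem hdiff) with h | h
    · exact h
    · exact absurd h (fun h => hprime.ne_top (Ii.eq_top_of_isUnit_mem h hunit))
  have hc : c ∈ Ii := by
    rcases Nat.eq_zero_or_pos p with h0 | h0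
    · -- p = 0 : then c^0 = 1 ∈ Ii, contradiction; but also X + c^q gives c ∈ Ii
      subst h0
      exact absurd (by simpa using hcp) (fun h => hprime.ne_top (Ideal.eq_top_of_isUnit_mem _ h isUnit_one))
    · exact hprime.mem_of_pow_mem p hcp
  have : (PowerSeries.X : PowerSeries A) ∈ Ii := by
    have : (PowerSeries.X + c ^ q) - c ^ q ∈ Ii :=
      Ii.sub_mem hq (Ii.pow_mem_of_mem hc q (by omega))
    simpa using this
  exact htX this

/-- Let `A` be an integral domain which is `J`-adically complete, `I₁, …, I_s` prime ideals
of `A⟦t⟧` not containing `t`, and `c` a nonzero element of the ideal `(J)` of `A⟦t⟧`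
generated by the image of `J`.  Then the set of integers `p ≥ 1` such that `t + c^p` lies in
some `I_i` has at most `s` elements. -/
theorem powerSeries_bad_exponents_card_le
    {A : Type*} [CommRing A] [IsDomain A] (J : Ideal A) [IsAdicComplete J A]
    (s : ℕ) (I : Fin s → Ideal (PowerSeries A))
    (hprime : ∀ i, (I i).IsPrime)
    (htX : ∀ i, (PowerSeries.X : PowerSeries A) ∉ I i)
    (c : PowerSeries A) (hcJ : c ∈ Ideal.map (PowerSeries.C : A →+* PowerSeries A) J) (hc0 : c ≠ 0) :
    {p : ℕ | 1 ≤ p ∧ ∃ i, PowerSeries.X + c ^ p ∈ I i}.encard ≤ (s : ℕ∞) := by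
  set S := {p : ℕ | 1 ≤ p ∧ ∃ i, PowerSeries.X + c ^ p ∈ I i} with hS
  classical
  have hchoice : ∀ p ∈ S, ∃ i, PowerSeries.X + c ^ p ∈ I i := fun p hp => hp.2
  choose f hf using hchoice
  rcases Nat.eq_zero_or_pos s with hs0 | hs0
  · subst hs0
    have : S = ∅ := by
      ext p; simp only [hS, Set.mem_setOf_eq, Set.mem_empty_iff_false, iff_false]
      rintro ⟨-, i, -⟩; exact absurd i.2 (by simp)
    simp [this]
  let g : ℕ → Fin s := fun p => if h : p ∈ S then f p h else ⟨0, hs0⟩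
  have hinj : Set.InjOn g S := by
    intro p hp q hq hpq'
    by_contra hne
    rcases Nat.lt_or_ge p q with h | h
    · have : f p hp = f q hq := by simpa [g, dif_pos hp, dif_pos hq] using hpq'
      exact unique_exp J (I (f q hq)) (hprime _) (htX _) c hcJ h
        (this ▸ hf p hp) (hf q hq)
    · have hlt : q < p := by omega
      have : f p hp = f q hq := by simpa [g, dif_pos hp, dif_pos hq] using hpq'
      exact unique_exp J (I (f p hp)) (hprime _) (htX _) c hcJ hlt
        (this ▸ hf q hq) (hf p hp)
  calc S.encard ≤ (Set.univ : Set (Fin s)).encard :=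
        Set.encard_le_encard_of_injOn (fun p _ => Set.mem_univ _) hinj
    _ = (s : ℕ∞) := by simp [Set.encard_univ, ENat.card_eq_coe_fintype_card]
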